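/- arXiv:1610.02276 — 4 statements merged into one kernel-verified Lean document; each statement's English description precedes it below -/
import Mathlib

section
/- Let Y₁,…,Y_ℓ be random variables such that Y_i is conditionally independent of all Y_j (j < i, j ∉ 𝒩_i) given Y_{𝒩_i}, where 𝒩_i = {i−1, ĩ} with ĩ the most recent earlier index of the same type. If additionally I(Y_i; Y_ĩ | Y_{i−1}, Y_j) > 0 for all j < i with j ∉ 𝒩_i, then I(Y_i; Y_{i−1}, Y_j) < I(Y_i; Y_{𝒩_i}) for all such j. -/
open Finset Real

/-- Shannon entropy of the discrete random variable `f` on a finite probability space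
with pmf `μ`. -/
noncomputable def pEnt {Ω α : Type*} [Fintype Ω] [Fintype α] [DecidableEq α]
    (μ : Ω → ℝ) (f : Ω → α) : ℝ :=
  - ∑ a, (∑ ω ∈ Finset.univ.filter (fun ω => f ω = a), μ ω) *
      Real.log (∑ ω ∈ Finset.univ.filter (fun ω => f ω = a), μ ω)

/-- Mutual information `I(f; g)`. -/
noncomputable def pMI {Ω α β : Type*} [Fintype Ω] [Fintype α] [DecidableEq α]
    [Fintype β] [DecidableEq β] (μ : Ω → ℝ) (f : Ω → α) (g : Ω → β) : ℝ :=
  pEnt μ f + pEnt μ g - pEnt μ (fun ω => (f ω, g ω))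

/-- Conditional mutual information `I(f; g | h)`. -/
noncomputable def pCMI {Ω α β γ : Type*} [Fintype Ω] [Fintype α] [DecidableEq α]
    [Fintype β] [DecidableEq β] [Fintype γ] [DecidableEq γ]
    (μ : Ω → ℝ) (f : Ω → α) (g : Ω → β) (h : Ω → γ) : ℝ :=
  pMI μ f (fun ω => (g ω, h ω)) - pMI μ f h

lemma pEnt_comp {Ω α β : Type*} [Fintype Ω] [Fintype α] [DecidableEq α]
    [Fintype β] [DecidableEq β] (μ : Ω → ℝ) (g : Ω → α) (e : α → β)
    (he : Function.Injective e) :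
    pEnt μ (fun ω => e (g ω)) = pEnt μ g := by
  unfold pEnt
  congr 1
  set F : β → ℝ := fun b => (∑ ω ∈ Finset.univ.filter (fun ω => e (g ω) = b), μ ω) *
      Real.log (∑ ω ∈ Finset.univ.filter (fun ω => e (g ω) = b), μ ω) with hF
  show ∑ b, F b = _
  have h1 : ∑ b ∈ (Finset.univ : Finset α).image e, F b = ∑ a, F (e a) :=
    Finset.sum_image (fun x _ y _ h => he h)
  have h2 : ∑ b, F b = ∑ b ∈ (Finset.univ : Finset α).image e, F b := by
    symm
    apply Finset.sum_subset (Finset.subset_univ _)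
    intro b _ hb
    have : Finset.univ.filter (fun ω => e (g ω) = b) = ∅ := by
      ext ω
      simp only [Finset.mem_filter, Finset.mem_univ, true_and, Finset.notMem_empty, iff_false]
      intro h
      exact hb (Finset.mem_image.mpr ⟨g ω, Finset.mem_univ _, h⟩)
    simp [hF, this]
  rw [h2, h1]
  apply Finset.sum_congr rfl
  intro a _
  have : Finset.univ.filter (fun ω => e (g ω) = e a)
      = Finset.univ.filter (fun ω => g ω = a) := by
    ext ω
    simp [he.eq_iff]
  simp only [hF, this]

lemma pMI_comp {Ω α β γ : Type*} [Fintype Ω] [Fintype α] [DecidableEq α]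
    [Fintype β] [DecidableEq β] [Fintype γ] [DecidableEq γ]
    (μ : Ω → ℝ) (f : Ω → α) (g : Ω → β) (e : β → γ)
    (he : Function.Injective e) :
    pMI μ f (fun ω => e (g ω)) = pMI μ f g := by
  unfold pMI
  have h3 : pEnt μ (fun ω => (f ω, e (g ω)))
      = pEnt μ (fun ω => Prod.map id e ((fun ω => (f ω, g ω)) ω)) := rfl
  rw [pEnt_comp μ g e he, h3,
    pEnt_comp μ (fun ω => (f ω, g ω)) (Prod.map id e)
      (Function.Injective.prodMap Function.injective_id he)]

/-- If `Y i` is conditionally independent of each `Y j` (`j < i`,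
`j ∉ 𝒩 i = {i−1, it}`) given `Y (i−1), Y it` — expressed as
`I(Y i; Y j | Y (i−1), Y it) = 0` — where `it` is the most recent earlier index of the
same type, and if `I(Y i; Y it | Y (i−1), Y j) > 0` for all such `j`, then
`I(Y i; Y (i−1), Y j) < I(Y i; Y (i−1), Y it)` for all such `j`. -/
theorem stmt8 {Ω 𝒴 : Type*} [Fintype Ω] [Fintype 𝒴] [DecidableEq 𝒴]
    (μ : Ω → ℝ) (hμ : ∀ ω, 0 ≤ μ ω) (hμsum : ∑ ω, μ ω = 1)
    (Y : ℕ → Ω → 𝒴) (T : ℕ → ℕ) (i it : ℕ) (hi : 1 ≤ i)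
    (hit : it < i ∧ T it = T i ∧ ∀ j, it < j → j < i → T j ≠ T i)
    (hci : ∀ j, j < i → j ≠ i - 1 → j ≠ it →
      pCMI μ (Y i) (Y j) (fun ω => (Y (i-1) ω, Y it ω)) = 0)
    (hres : ∀ j, j < i → j ≠ i - 1 → j ≠ it →
      0 < pCMI μ (Y i) (Y it) (fun ω => (Y (i-1) ω, Y j ω))) :
    ∀ j, j < i → j ≠ i - 1 → j ≠ it →
      pMI μ (Y i) (fun ω => (Y (i-1) ω, Y j ω)) <
        pMI μ (Y i) (fun ω => (Y (i-1) ω, Y it ω)) := by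
  intro j hj hj1 hjt
  have h1 := hci j hj hj1 hjt
  have h2 := hres j hj hj1 hjt
  unfold pCMI at h1 h2
  have e : 𝒴 × (𝒴 × 𝒴) → 𝒴 × (𝒴 × 𝒴) := fun p => (p.2.2, (p.2.1, p.1))
  have key : pMI μ (Y i) (fun ω => (Y j ω, (Y (i-1) ω, Y it ω)))
      = pMI μ (Y i) (fun ω => (Y it ω, (Y (i-1) ω, Y j ω))) := by
    have := pMI_comp μ (Y i) (fun ω => (Y it ω, (Y (i-1) ω, Y j ω)))
      (fun p => (p.2.2, (p.2.1, p.1)))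
      (by intro ⟨a, b, c⟩ ⟨a', b', c'⟩ h; simp_all)
    simpa using this
  linarith
end

section
/- For a uniformly random permutation of a multiset of ℓ objects with K_t ≥ 1 objects of type t and K_{t'} ≥ 1 objects of type t' (t ≠ t'), the probability that the last occurrence of type t immediately precedes the first occurrence of type t' is at most 1/ℓ. More precisely this probability equals (1/ℓ)·K_t!·K_{t'}!/(K_t+K_{t'}−1)! ≤ 1/ℓ. -/
open Finset Equiv

-- generic: number of permutations realizing a given word
lemma card_filter_comp_eq {α ι : Type*} [Fintype α] [DecidableEq α] [Fintype ι] [DecidableEq ι]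
    (d w : α → ι)
    (h : ∀ i, (univ.filter (fun a => w a = i)).card = (univ.filter (fun a => d a = i)).card) :
    (univ.filter (fun σ : Equiv.Perm α => d ∘ ⇑σ = w)).card
      = ∏ i, ((univ.filter (fun a => d a = i)).card).factorial := by
  have e : ∀ i, {x // w x = i} ≃ {x // d x = i} := fun i =>
    Fintype.equivOfCardEq (by simpa [Fintype.card_subtype] using h i)
  set ρ : Equiv.Perm α :=
    (Equiv.sigmaFiberEquiv w).symm.trans
      ((Equiv.sigmaCongrRight e).trans (Equiv.sigmaFiberEquiv d)) with hρ
  have hdρ : ∀ x, d (ρ x) = w x := by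
    intro x
    simp only [hρ, Equiv.trans_apply]
    have : (Equiv.sigmaFiberEquiv w).symm x = ⟨w x, ⟨x, rfl⟩⟩ := rfl
    rw [this]
    exact (e (w x) ⟨x, rfl⟩).2
  rw [show (∏ i, ((univ.filter (fun a => d a = i)).card).factorial)
      = (univ.filter (fun σ : Equiv.Perm α => d ∘ ⇑σ = d)).card by
    rw [← Fintype.card_subtype]
    rw [DomMulAct.stabilizer_card d]
    exact Finset.prod_congr rfl fun i _ => by rw [Fintype.card_subtype]]
  apply Finset.card_bij' (fun σ _ => σ * ρ⁻¹) (fun σ _ => σ * ρ)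
  · intro σ hσ
    simp only [mem_filter, mem_univ, true_and] at hσ ⊢
    funext x
    have := congrFun hσ (ρ⁻¹ x)
    simp only [Function.comp_apply] at this ⊢
    rw [Equiv.Perm.mul_apply, this, ← hdρ (ρ⁻¹ x), ← Equiv.Perm.mul_apply, mul_inv_cancel, Equiv.Perm.one_apply]
  · intro σ hσ
    simp only [mem_filter, mem_univ, true_and] at hσ ⊢
    funext x
    have := congrFun hσ (ρ x)
    simp only [Function.comp_apply] at this ⊢
    rw [Equiv.Perm.mul_apply, this, hdρ]
  · intro σ _; simp [mul_assoc]
  · intro σ _; simp [mul_assoc]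


lemma sum_range_choose_eq (a m : ℕ) :
    ∑ k ∈ range (m + 1), k.choose a = (m + 1).choose (a + 1) := by
  rw [← Nat.sum_Icc_choose m a]
  symm
  apply Finset.sum_subset
  · intro x hx; simp only [mem_Icc] at hx; simp only [mem_range]; omega
  · intro x hx hx'; simp only [mem_Icc, mem_range, not_and, not_le] at hx hx'
    have : x < a := by by_contra h; omega
    exact Nat.choose_eq_zero_of_lt this

lemma sum_choose_mul_choose (b : ℕ) : ∀ a m : ℕ,
    ∑ k ∈ range (m + 1), k.choose a * (m - k).choose b = (m + 1).choose (a + b + 1) := by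
  induction b with
  | zero => intro a m; simpa using sum_range_choose_eq a m
  | succ b ih =>
    intro a m
    induction m with
    | zero => simp [Nat.choose_eq_zero_of_lt]
    | succ m ihm =>
      rw [Finset.sum_range_succ]
      have h1 : ∀ k ∈ range (m + 1), k.choose a * (m + 1 - k).choose (b + 1)
          = k.choose a * (m - k).choose b + k.choose a * (m - k).choose (b + 1) := by
        intro k hk; simp only [mem_range] at hk
        rw [show m + 1 - k = (m - k) + 1 by omega, Nat.choose_succ_succ, Nat.mul_add]
      rw [Finset.sum_congr rfl h1, Finset.sum_add_distrib, ih a m, ihm]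
      simp only [Nat.sub_self, Nat.choose_eq_zero_of_lt (Nat.succ_pos b), mul_zero, add_zero]
      rw [show a + (b+1) + 1 = (a + b + 1) + 1 by ring, ← Nat.choose_succ_succ]

lemma choose_lower_bound (a b : ℕ) (ha : 1 ≤ a) : b + 1 ≤ (a + b).choose b := by
  induction b with
  | zero => simp
  | succ b ih =>
    have h2 : 1 ≤ (a + b).choose (b + 1) := Nat.choose_pos (by omega)
    calc b + 1 + 1 ≤ (a+b).choose b + (a+b).choose (b+1) := by omega
    _ = (a + b + 1).choose (b + 1) := (Nat.choose_succ_succ _ _).symm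
    _ = (a + (b+1)).choose (b+1) := by ring_nf

lemma fact_mul_fact_le (a b : ℕ) (ha : 1 ≤ a) (hb : 1 ≤ b) :
    a.factorial * b.factorial ≤ (a + b - 1).factorial := by
  obtain ⟨b, rfl⟩ : ∃ b', b = b' + 1 := ⟨b - 1, by omega⟩
  have key : (a + b).choose b * b.factorial * a.factorial = (a + b).factorial := by
    have := Nat.choose_mul_factorial_mul_factorial (show b ≤ a + b by omega)
    simpa [Nat.add_sub_cancel_left, Nat.add_sub_cancel] using this
  have h : a + (b + 1) - 1 = a + b := by omega
  rw [h, ← key, Nat.factorial_succ]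
  have := choose_lower_bound a b ha
  calc a.factorial * ((b+1) * b.factorial) = (b+1) * b.factorial * a.factorial := by ring
  _ ≤ (a + b).choose b * b.factorial * a.factorial := by
      apply Nat.mul_le_mul_right; apply Nat.mul_le_mul_right; omega

lemma fiber2_card {γ : Type*} [Fintype γ] [DecidableEq γ] (f : γ → Fin 3) :
    (univ.filter (fun a => f a = 2)).card
      = Fintype.card γ - (univ.filter (fun a => f a = 0)).card
          - (univ.filter (fun a => f a = 1)).card := by
  have h := Finset.card_eq_sum_card_fiberwise (fun x (_ : x ∈ (univ : Finset γ)) =>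
    mem_univ (f x))
  rw [Finset.card_univ] at h
  rw [Fin.sum_univ_three] at h
  omega

lemma card_Ek (ℓ : ℕ) (d : Fin ℓ → Fin 3) (Kt Kt' : ℕ)
    (hKtd : (univ.filter (fun i => d i = 0)).card = Kt) (hKt1 : 1 ≤ Kt)
    (hKt'd : (univ.filter (fun i => d i = 1)).card = Kt') (hKt'1 : 1 ≤ Kt')
    (k : ℕ) (hk : k + 1 < ℓ) :
    (univ.filter (fun σ : Equiv.Perm (Fin ℓ) =>
        (∀ j : Fin ℓ, d (σ j) = 0 → (j : ℕ) ≤ k) ∧ (∀ j : Fin ℓ, d (σ j) = 1 → k < (j : ℕ)) ∧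
        (∃ j : Fin ℓ, d (σ j) = 0 ∧ (j : ℕ) = k) ∧
        (∃ j : Fin ℓ, d (σ j) = 1 ∧ (j : ℕ) = k + 1))).card
      = k.choose (Kt - 1) * (ℓ - 2 - k).choose (Kt' - 1)
          * (Kt.factorial * (Kt'.factorial * (ℓ - (Kt + Kt')).factorial)) := by
  classical
  set kf : Fin ℓ := ⟨k, by omega⟩ with hkf
  set kf' : Fin ℓ := ⟨k + 1, hk⟩ with hkf'
  set w : Finset (Fin ℓ) → Finset (Fin ℓ) → Fin ℓ → Fin 3 :=
    fun A B x => if x ∈ A then 0 else if x ∈ B then 1 else 2 with hw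
  have hw0 : ∀ A B x, w A B x = 0 ↔ x ∈ A := by
    intro A B x; simp only [hw]; split_ifs with h1 h2
    · simp [h1]
    · exact iff_of_false (by decide) h1
    · exact iff_of_false (by decide) h1
  have hw1 : ∀ (A B : Finset (Fin ℓ)) x, x ∉ A → (w A B x = 1 ↔ x ∈ B) := by
    intro A B x hx; simp only [hw]; rw [if_neg hx]; split_ifs with h2
    · simp [h2]
    · exact iff_of_false (by decide) h2
  -- the parameter set
  set P := (powersetCard (Kt - 1) (Iio kf)) ×ˢ (powersetCard (Kt' - 1) (Ioi kf')) with hP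
  -- basic facts about parameters
  have hparam : ∀ p ∈ P, ((insert kf p.1).card = Kt ∧ (∀ x ∈ insert kf p.1, (x : ℕ) ≤ k))
      ∧ ((insert kf' p.2).card = Kt' ∧ (∀ x ∈ insert kf' p.2, k + 1 ≤ (x : ℕ))) := by
    rintro ⟨A', B'⟩ hp
    simp only [hP, mem_product, mem_powersetCard] at hp
    obtain ⟨⟨hA'sub, hA'card⟩, hB'sub, hB'card⟩ := hp
    have hkfA' : kf ∉ A' := fun h => absurd (hA'sub h) (by simp)
    have hkfB' : kf' ∉ B' := fun h => absurd (hB'sub h) (by simp)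
    refine ⟨⟨?_, ?_⟩, ?_, ?_⟩
    · rw [card_insert_of_notMem hkfA', hA'card]; omega
    · intro x hx
      rcases mem_insert.1 hx with rfl | hx
      · simp [hkf]
      · have := hA'sub hx; rw [mem_Iio, Fin.lt_def] at this; simp [hkf] at this; omega
    · rw [card_insert_of_notMem hkfB', hB'card]; omega
    · intro x hx
      rcases mem_insert.1 hx with rfl | hx
      · simp [hkf']
      · have := hB'sub hx; rw [mem_Ioi, Fin.lt_def] at this; simp [hkf'] at this; omega
  -- rewrite the filter as a biUnion
  have hsplit : (univ.filter (fun σ : Equiv.Perm (Fin ℓ) =>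
        (∀ j : Fin ℓ, d (σ j) = 0 → (j : ℕ) ≤ k) ∧ (∀ j : Fin ℓ, d (σ j) = 1 → k < (j : ℕ)) ∧
        (∃ j : Fin ℓ, d (σ j) = 0 ∧ (j : ℕ) = k) ∧
        (∃ j : Fin ℓ, d (σ j) = 1 ∧ (j : ℕ) = k + 1)))
      = P.biUnion (fun p =>
          univ.filter (fun σ : Equiv.Perm (Fin ℓ) =>
            d ∘ ⇑σ = w (insert kf p.1) (insert kf' p.2))) := by
    ext σ
    simp only [mem_filter, mem_univ, true_and, mem_biUnion]
    constructor
    · rintro ⟨h1, h2, ⟨j0, hj0, hj0v⟩, ⟨j1, hj1, hj1v⟩⟩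
      have hj0e : j0 = kf := Fin.ext (by simp [hkf, hj0v])
      have hj1e : j1 = kf' := Fin.ext (by simp [hkf', hj1v])
      set Aσ := univ.filter (fun x => d (σ x) = 0) with hAσ
      set Bσ := univ.filter (fun x => d (σ x) = 1) with hBσ
      have hAσcard : Aσ.card = Kt := by
        rw [← hKtd]
        have : Aσ = (univ.filter fun i => d i = 0).image ⇑σ.symm := by
          ext x
          simp only [hAσ, mem_filter, mem_univ, true_and, mem_image]
          constructor
          · intro h; exact ⟨σ x, h, σ.symm_apply_apply x⟩
          · rintro ⟨y, hy, rfl⟩; simpa [σ.apply_symm_apply] using hy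
        rw [this, card_image_of_injective _ σ.symm.injective]
      have hBσcard : Bσ.card = Kt' := by
        rw [← hKt'd]
        have : Bσ = (univ.filter fun i => d i = 1).image ⇑σ.symm := by
          ext x
          simp only [hBσ, mem_filter, mem_univ, true_and, mem_image]
          constructor
          · intro h; exact ⟨σ x, h, σ.symm_apply_apply x⟩
          · rintro ⟨y, hy, rfl⟩; simpa [σ.apply_symm_apply] using hy
        rw [this, card_image_of_injective _ σ.symm.injective]
      have hkfAσ : kf ∈ Aσ := by rw [hAσ, mem_filter]; exact ⟨mem_univ _, hj0e ▸ hj0⟩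
      have hkf'Bσ : kf' ∈ Bσ := by rw [hBσ, mem_filter]; exact ⟨mem_univ _, hj1e ▸ hj1⟩
      refine ⟨⟨Aσ.erase kf, Bσ.erase kf'⟩, ?_, ?_⟩
      · simp only [hP, mem_product, mem_powersetCard]
        refine ⟨⟨?_, ?_⟩, ?_, ?_⟩
        · intro x hx
          rw [mem_erase] at hx
          obtain ⟨hxne, hxA⟩ := hx
          rw [hAσ, mem_filter] at hxA
          have hle := h1 x hxA.2
          rw [mem_Iio, Fin.lt_def]
          have : (x : ℕ) ≠ k := fun h => hxne (Fin.ext (by simp [hkf, h]))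
          simp only [hkf]; omega
        · rw [card_erase_of_mem hkfAσ, hAσcard]
        · intro x hx
          rw [mem_erase] at hx
          obtain ⟨hxne, hxB⟩ := hx
          rw [hBσ, mem_filter] at hxB
          have hle := h2 x hxB.2
          rw [mem_Ioi, Fin.lt_def]
          have : (x : ℕ) ≠ k + 1 := fun h => hxne (Fin.ext (by simp [hkf', h]))
          simp only [hkf']; omega
        · rw [card_erase_of_mem hkf'Bσ, hBσcard]
      · rw [insert_erase hkfAσ, insert_erase hkf'Bσ]
        funext x
        by_cases hxA : x ∈ Aσ
        · have : w Aσ Bσ x = 0 := (hw0 _ _ _).2 hxA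
          rw [hAσ, mem_filter] at hxA
          simp only [Function.comp_apply, this, hxA.2]
        · by_cases hxB : x ∈ Bσ
          · have : w Aσ Bσ x = 1 := (hw1 _ _ _ hxA).2 hxB
            rw [hBσ, mem_filter] at hxB
            simp only [Function.comp_apply, this, hxB.2]
          · have hne0 : d (σ x) ≠ 0 := by
              intro h; exact hxA (by rw [hAσ, mem_filter]; exact ⟨mem_univ _, h⟩)
            have hne1 : d (σ x) ≠ 1 := by
              intro h; exact hxB (by rw [hBσ, mem_filter]; exact ⟨mem_univ _, h⟩)
            have h2' : d (σ x) = 2 := by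
              have : ∀ v : Fin 3, v ≠ 0 → v ≠ 1 → v = 2 := by decide
              exact this _ hne0 hne1
            have hw2 : w Aσ Bσ x = 2 := by simp only [hw]; rw [if_neg hxA, if_neg hxB]
            simp only [Function.comp_apply, h2', hw2]
    · rintro ⟨p, hp, hσ⟩
      obtain ⟨⟨hAcard, hAle⟩, hBcard, hBge⟩ := hparam p hp
      have hwx := fun x => congrFun hσ x
      simp only [Function.comp_apply] at hwx
      have hdisj : ∀ x ∈ insert kf' p.2, x ∉ insert kf p.1 := by
        intro x hx hxA
        have := hAle x hxA; have := hBge x hx; omega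
      refine ⟨?_, ?_, ⟨kf, ?_, by simp [hkf]⟩, ⟨kf', ?_, by simp [hkf']⟩⟩
      · intro j hj
        rw [hwx j] at hj
        exact hAle j ((hw0 _ _ _).1 hj)
      · intro j hj
        rw [hwx j] at hj
        by_cases hjA : j ∈ insert kf p.1
        · exact absurd ((hw0 _ _ _).2 hjA) (by rw [hj]; decide)
        · have := hBge j ((hw1 _ _ _ hjA).1 hj); omega
      · rw [hwx kf]; exact (hw0 _ _ _).2 (mem_insert_self _ _)
      · rw [hwx kf']
        exact (hw1 _ _ _ (hdisj _ (mem_insert_self _ _))).2 (mem_insert_self _ _)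
  rw [hsplit]
  -- disjointness
  have hdisjU : ∀ p ∈ P, ∀ q ∈ P, p ≠ q →
      Disjoint (univ.filter (fun σ : Equiv.Perm (Fin ℓ) =>
          d ∘ ⇑σ = w (insert kf p.1) (insert kf' p.2)))
        (univ.filter (fun σ : Equiv.Perm (Fin ℓ) =>
          d ∘ ⇑σ = w (insert kf q.1) (insert kf' q.2))) := by
    intro p hp q hq hpq
    rw [Finset.disjoint_left]
    intro σ hσp hσq
    rw [mem_filter] at hσp hσq
    have hww : w (insert kf p.1) (insert kf' p.2) = w (insert kf q.1) (insert kf' q.2) := by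
      rw [← hσp.2, ← hσq.2]
    obtain ⟨⟨_, hAlep⟩, _, hBgep⟩ := hparam p hp
    obtain ⟨⟨_, hAleq⟩, _, hBgeq⟩ := hparam q hq
    have hAeq : insert kf p.1 = insert kf q.1 := by
      ext x
      rw [← hw0 (insert kf p.1) (insert kf' p.2) x, ← hw0 (insert kf q.1) (insert kf' q.2) x,
        hww]
    have hBeq : insert kf' p.2 = insert kf' q.2 := by
      ext x
      by_cases hxp : x ∈ insert kf p.1
      · constructor
        · intro h; have h1 := hBgep x h; exact absurd (hAlep x hxp) (by omega)
        · intro h; have h1 := hBgeq x h; exact absurd (hAlep x hxp) (by omega)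
      · rw [← hw1 (insert kf p.1) (insert kf' p.2) x hxp,
          ← hw1 (insert kf q.1) (insert kf' q.2) x (hAeq ▸ hxp), hww]
    apply hpq
    have hkfp1 : kf ∉ p.1 := by
      intro h
      simp only [hP, mem_product, mem_powersetCard] at hp
      exact absurd (hp.1.1 h) (by simp)
    have hkfq1 : kf ∉ q.1 := by
      intro h
      simp only [hP, mem_product, mem_powersetCard] at hq
      exact absurd (hq.1.1 h) (by simp)
    have hkfp2 : kf' ∉ p.2 := by
      intro h
      simp only [hP, mem_product, mem_powersetCard] at hp
      exact absurd (hp.2.1 h) (by simp)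
    have hkfq2 : kf' ∉ q.2 := by
      intro h
      simp only [hP, mem_product, mem_powersetCard] at hq
      exact absurd (hq.2.1 h) (by simp)
    have h1 : p.1 = q.1 := by
      rw [← erase_insert hkfp1, ← erase_insert hkfq1, hAeq]
    have h2 : p.2 = q.2 := by
      rw [← erase_insert hkfp2, ← erase_insert hkfq2, hBeq]
    exact Prod.ext h1 h2
  rw [Finset.card_biUnion hdisjU]
  -- each piece has the same cardinality
  have hpiece : ∀ p ∈ P, (univ.filter (fun σ : Equiv.Perm (Fin ℓ) =>
      d ∘ ⇑σ = w (insert kf p.1) (insert kf' p.2))).card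
        = Kt.factorial * (Kt'.factorial * (ℓ - (Kt + Kt')).factorial) := by
    intro p hp
    obtain ⟨⟨hAcard, hAle⟩, hBcard, hBge⟩ := hparam p hp
    set A := insert kf p.1
    set B := insert kf' p.2
    have hAB : ∀ x ∈ B, x ∉ A := by
      intro x hx hxA; have := hAle x hxA; have := hBge x hx; omega
    have hfib0 : (univ.filter (fun a => w A B a = 0)) = A := by
      ext x; simp only [mem_filter, mem_univ, true_and]; exact hw0 A B x
    have hfib1 : (univ.filter (fun a => w A B a = 1)) = B := by
      ext x; simp only [mem_filter, mem_univ, true_and]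
      constructor
      · intro h
        by_cases hxA : x ∈ A
        · exact absurd ((hw0 A B x).2 hxA) (by rw [h]; decide)
        · exact (hw1 A B x hxA).1 h
      · intro h; exact (hw1 A B x (hAB x h)).2 h
    have hfibs : ∀ i, (univ.filter (fun a => w A B a = i)).card
        = (univ.filter (fun a => d a = i)).card := by
      intro i
      have hi : i = 0 ∨ i = 1 ∨ i = 2 := by fin_cases i <;> simp
      rcases hi with rfl | rfl | rfl
      · rw [hfib0, hKtd, hAcard]
      · rw [hfib1, hKt'd, hBcard]
      · rw [fiber2_card, fiber2_card, hfib0, hfib1, hKtd, hKt'd, hAcard, hBcard]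
    rw [card_filter_comp_eq d (w A B) hfibs, Fin.prod_univ_three, hKtd, hKt'd, fiber2_card,
      hKtd, hKt'd, Fintype.card_fin, show ℓ - Kt - Kt' = ℓ - (Kt + Kt') from by omega, Nat.mul_assoc]
  rw [Finset.sum_congr rfl hpiece, Finset.sum_const, smul_eq_mul]
  congr 1
  have hIio : (Iio kf).card = k := Fin.card_Iio kf
  have hIoi : (Ioi kf').card = ℓ - 1 - (k + 1) := Fin.card_Ioi kf'
  rw [hP, Finset.card_product, card_powersetCard, card_powersetCard, hIio, hIoi,
    show ℓ - 1 - (k + 1) = ℓ - 2 - k from by omega]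


/-- For a uniformly random permutation of a multiset of `ℓ` objects with
`Kt ≥ 1` objects of type `t` and `Kt' ≥ 1` objects of type `t'` (`t ≠ t'`), the
probability that the last occurrence of type `t` immediately precedes the first
occurrence of type `t'` equals `(1/ℓ) · Kt! · Kt'! / (Kt + Kt' − 1)! ≤ 1/ℓ`. -/
theorem stmt9 (ℓ τ : ℕ) (hℓ : 1 ≤ ℓ) (c : Fin ℓ → Fin τ) (t t' : Fin τ) (htt : t ≠ t')
    (Kt Kt' : ℕ)
    (hKt : Kt = (Finset.univ.filter (fun i => c i = t)).card) (hKt1 : 1 ≤ Kt)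
    (hKt' : Kt' = (Finset.univ.filter (fun i => c i = t')).card) (hKt'1 : 1 ≤ Kt') :
    ∀ E : Finset (Equiv.Perm (Fin ℓ)),
      E = Finset.univ.filter (fun σ : Equiv.Perm (Fin ℓ) =>
        ∃ k k' : Fin ℓ, (k : ℕ) + 1 = (k' : ℕ) ∧ c (σ k) = t ∧ c (σ k') = t' ∧
          (∀ j, k < j → c (σ j) ≠ t) ∧ (∀ j, j < k' → c (σ j) ≠ t')) →
      (E.card : ℝ) / (Fintype.card (Equiv.Perm (Fin ℓ)) : ℝ)
          = (1 / ℓ) * (Nat.factorial Kt * Nat.factorial Kt' : ℝ)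
              / (Nat.factorial (Kt + Kt' - 1) : ℝ) ∧
      (E.card : ℝ) / (Fintype.card (Equiv.Perm (Fin ℓ)) : ℝ) ≤ 1 / ℓ := by
  classical
  intro E hE
  set d : Fin ℓ → Fin 3 := fun i => if c i = t then 0 else if c i = t' then 1 else 2 with hd
  have hd0 : ∀ i, d i = 0 ↔ c i = t := by
    intro i; simp only [hd]; split_ifs with h1 h2
    · simp [h1]
    · exact iff_of_false (by decide) (fun h => htt (h.symm.trans h2))
    · exact iff_of_false (by decide) h1
  have hd1 : ∀ i, d i = 1 ↔ c i = t' := by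
    intro i; simp only [hd]; split_ifs with h1 h2
    · exact iff_of_false (by decide) (fun h => htt (h1.symm.trans h))
    · simp [h2]
    · exact iff_of_false (by decide) h2
  have hKtd : (univ.filter fun i => d i = 0).card = Kt := by
    rw [hKt]; congr 1; exact Finset.filter_congr (fun i _ => hd0 i)
  have hKt'd : (univ.filter fun i => d i = 1).card = Kt' := by
    rw [hKt']; congr 1; exact Finset.filter_congr (fun i _ => hd1 i)
  have hdisjTT : Disjoint (univ.filter fun i => c i = t) (univ.filter fun i => c i = t') := by
    rw [Finset.disjoint_left]; intro a ha hb
    rw [mem_filter] at ha hb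
    exact htt (ha.2.symm.trans hb.2)
  have hn : Kt + Kt' ≤ ℓ := by
    have h1 := Finset.card_le_univ
      ((univ.filter fun i => c i = t) ∪ (univ.filter fun i => c i = t'))
    rw [Finset.card_union_of_disjoint hdisjTT] at h1
    rw [Fintype.card_fin] at h1
    omega
  have hl2 : 2 ≤ ℓ := by omega
  set Ek : ℕ → Finset (Equiv.Perm (Fin ℓ)) := fun k =>
    univ.filter (fun σ : Equiv.Perm (Fin ℓ) =>
      (∀ j : Fin ℓ, d (σ j) = 0 → (j : ℕ) ≤ k) ∧ (∀ j : Fin ℓ, d (σ j) = 1 → k < (j : ℕ)) ∧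
      (∃ j : Fin ℓ, d (σ j) = 0 ∧ (j : ℕ) = k) ∧
      (∃ j : Fin ℓ, d (σ j) = 1 ∧ (j : ℕ) = k + 1)) with hEk
  have hEb : E = (range (ℓ - 1)).biUnion Ek := by
    rw [hE]; ext σ
    simp only [hEk, mem_filter, mem_univ, true_and, mem_biUnion, mem_range]
    constructor
    · rintro ⟨k, k', hkk', h1, h2, h3, h4⟩
      have hk'lt := k'.isLt
      refine ⟨(k : ℕ), by omega, ?_, ?_, ⟨k, (hd0 _).2 h1, rfl⟩,
        ⟨k', (hd1 _).2 h2, hkk'.symm⟩⟩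
      · intro j hj
        by_contra hc
        push_neg at hc
        exact h3 j (Fin.lt_def.2 hc) ((hd0 _).1 hj)
      · intro j hj
        by_contra hc
        push_neg at hc
        exact h4 j (Fin.lt_def.2 (by omega)) ((hd1 _).1 hj)
    · rintro ⟨k, hk, h1, h2, ⟨j0, hj0, hj0v⟩, ⟨j1, hj1, hj1v⟩⟩
      refine ⟨j0, j1, by omega, (hd0 _).1 hj0, (hd1 _).1 hj1, ?_, ?_⟩
      · intro j hj hc
        have := h1 j ((hd0 _).2 hc)
        rw [Fin.lt_def, hj0v] at hj
        omega
      · intro j hj hc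
        have := h2 j ((hd1 _).2 hc)
        rw [Fin.lt_def, hj1v] at hj
        omega
  have hdisj : ∀ a ∈ range (ℓ - 1), ∀ b ∈ range (ℓ - 1), a ≠ b → Disjoint (Ek a) (Ek b) := by
    intro a _ b _ hab
    rw [Finset.disjoint_left]
    intro σ hσa hσb
    simp only [hEk, mem_filter, mem_univ, true_and] at hσa hσb
    obtain ⟨ha1, -, ⟨j0, hj0, hj0v⟩, -⟩ := hσa
    obtain ⟨hb1, -, ⟨j0', hj0', hj0v'⟩, -⟩ := hσb
    have h1 := ha1 j0' hj0'
    have h2 := hb1 j0 hj0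
    omega
  have cardE : E.card = (ℓ - 1).choose (Kt + Kt' - 1)
      * (Kt.factorial * (Kt'.factorial * (ℓ - (Kt + Kt')).factorial)) := by
    rw [hEb, Finset.card_biUnion hdisj]
    have hterm : ∀ k ∈ range (ℓ - 1), (Ek k).card
        = k.choose (Kt - 1) * (ℓ - 2 - k).choose (Kt' - 1)
            * (Kt.factorial * (Kt'.factorial * (ℓ - (Kt + Kt')).factorial)) := by
      intro k hk
      rw [mem_range] at hk
      exact card_Ek ℓ d Kt Kt' hKtd hKt1 hKt'd hKt'1 k (by omega)
    rw [Finset.sum_congr rfl hterm, ← Finset.sum_mul,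
      show ℓ - 1 = (ℓ - 2) + 1 from by omega, sum_choose_mul_choose,
      show (ℓ - 2) + 1 = ℓ - 1 from by omega,
      show (Kt - 1) + (Kt' - 1) + 1 = Kt + Kt' - 1 from by omega]
  have key : E.card * ((Kt + Kt' - 1).factorial * ℓ)
      = Kt.factorial * Kt'.factorial * ℓ.factorial := by
    have h1 : (ℓ - 1).choose (Kt + Kt' - 1) * (Kt + Kt' - 1).factorial
        * (ℓ - (Kt + Kt')).factorial = (ℓ - 1).factorial := by
      have h := Nat.choose_mul_factorial_mul_factorial
        (show Kt + Kt' - 1 ≤ ℓ - 1 by omega)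
      rw [show ℓ - 1 - (Kt + Kt' - 1) = ℓ - (Kt + Kt') from by omega] at h
      exact h
    have h2 : ℓ * (ℓ - 1).factorial = ℓ.factorial := Nat.mul_factorial_pred (by omega)
    rw [cardE, ← h2, ← h1]
    ring
  have hperm : (Fintype.card (Equiv.Perm (Fin ℓ)) : ℕ) = Nat.factorial ℓ := by
    rw [Fintype.card_perm, Fintype.card_fin]
  have hℓ0 : (ℓ : ℝ) ≠ 0 := Nat.cast_ne_zero.mpr (by omega)
  have hf1 : ((Kt + Kt' - 1).factorial : ℝ) ≠ 0 :=
    Nat.cast_ne_zero.mpr (Nat.factorial_ne_zero _)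
  have hf2 : (ℓ.factorial : ℝ) ≠ 0 := Nat.cast_ne_zero.mpr (Nat.factorial_ne_zero _)
  have hcast : (E.card : ℝ) * (((Kt + Kt' - 1).factorial : ℝ) * (ℓ : ℝ))
      = (Kt.factorial : ℝ) * (Kt'.factorial : ℝ) * (ℓ.factorial : ℝ) := by
    exact_mod_cast congrArg (fun x : ℕ => (x : ℝ)) key
  have heq : (E.card : ℝ) / (Fintype.card (Equiv.Perm (Fin ℓ)) : ℝ)
      = (1 / ℓ) * (Nat.factorial Kt * Nat.factorial Kt' : ℝ)
          / (Nat.factorial (Kt + Kt' - 1) : ℝ) := by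
    rw [hperm]
    field_simp
    linear_combination hcast
  refine ⟨heq, ?_⟩
  rw [heq]
  have hle : (Kt.factorial * Kt'.factorial : ℕ) ≤ (Kt + Kt' - 1).factorial :=
    fact_mul_fact_le Kt Kt' hKt1 hKt'1
  have hratio : ((Kt.factorial : ℝ) * (Kt'.factorial : ℝ))
      / ((Kt + Kt' - 1).factorial : ℝ) ≤ 1 := by
    rw [div_le_one (by positivity)]
    exact_mod_cast hle
  calc (1 / (ℓ:ℝ)) * ((Kt.factorial : ℝ) * (Kt'.factorial : ℝ))
        / ((Kt + Kt' - 1).factorial : ℝ)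
      = (1 / (ℓ:ℝ)) * (((Kt.factorial : ℝ) * (Kt'.factorial : ℝ))
          / ((Kt + Kt' - 1).factorial : ℝ)) := by ring
    _ ≤ (1 / (ℓ:ℝ)) * 1 := by
        apply mul_le_mul_of_nonneg_left hratio (by positivity)
    _ = 1 / (ℓ:ℝ) := mul_one _
end

section
/- For a discrete random variable X on a finite alphabet 𝒳 with distribution P and empirical distribution P̂ from samples, the plug-in entropy estimate satisfies |Ĥ(X) − H(X)| ≤ −2δ(P̂,P)·log(2δ(P̂,P)/|𝒳|), and consequently (using log x < √x for x > 0) |Ĥ(X) − H(X)| ≤ √(2|𝒳|·δ(P̂,P)). -/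
open Finset Real

private lemma eta_antitone {t : ℝ} (ht : 0 ≤ t) :
    AntitoneOn (fun q => Real.negMulLog (q + t) - Real.negMulLog q) (Set.Ici 0) := by
  have hderiv : ∀ x ∈ interior (Set.Ici (0:ℝ)),
      HasDerivAt (fun q => Real.negMulLog (q + t) - Real.negMulLog q)
        (Real.log x - Real.log (x + t)) x := by
    intro x hx
    rw [interior_Ici] at hx
    have hx0 : (0:ℝ) < x := hx
    have hxt : x + t ≠ 0 := by positivity
    have h1 : HasDerivAt (fun q : ℝ => Real.negMulLog (q + t)) (-Real.log (x + t) - 1) x := by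
      have := (Real.hasDerivAt_negMulLog hxt).comp x ((hasDerivAt_id x).add_const t)
      rw [mul_one] at this; exact this
    have h2 := Real.hasDerivAt_negMulLog (ne_of_gt hx0)
    have h3 := h1.sub h2
    rw [show Real.log x - Real.log (x + t) = -Real.log (x + t) - 1 - (-Real.log x - 1) from by ring]
    exact h3
  apply antitoneOn_of_deriv_nonpos (convex_Ici 0)
  · exact (Real.continuous_negMulLog.comp (continuous_id.add continuous_const)).sub
      Real.continuous_negMulLog |>.continuousOn
  · intro x hx
    exact (hderiv x hx).differentiableAt.differentiableWithinAt
  · intro x hx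
    rw [(hderiv x hx).deriv]
    have hx0 : (0:ℝ) < x := by rwa [interior_Ici] at hx
    have : Real.log x ≤ Real.log (x + t) := Real.log_le_log hx0 (by linarith)
    linarith

private lemma eta_one_sub {t : ℝ} (ht0 : 0 ≤ t) (ht : t ≤ 1/2) :
    Real.negMulLog (1 - t) ≤ Real.negMulLog t := by
  rcases eq_or_lt_of_le ht0 with h0 | h0
  · simp [← h0]
  -- tangent bound for log t
  have l1 : Real.log t ≤ 2*t - 1 - Real.log 2 := by
    have h2t : (0:ℝ) < 2*t := by linarith
    have := Real.log_le_sub_one_of_pos h2t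
    rw [Real.log_mul (by norm_num) (ne_of_gt h0)] at this
    linarith
  -- chord bound for log (1 - t)
  have l2 : -(2 * Real.log 2) * t ≤ Real.log (1 - t) := by
    have hc := strictConcaveOn_log_Ioi.concaveOn.2 (Set.mem_Ioi.2 (by norm_num : (0:ℝ) < 1/2))
      (Set.mem_Ioi.2 one_pos) (by linarith : (0:ℝ) ≤ 2*t) (by linarith : (0:ℝ) ≤ 1 - 2*t)
      (by ring : 2*t + (1 - 2*t) = 1)
    have harg : (2*t) • ((1:ℝ)/2) + (1 - 2*t) • (1:ℝ) = 1 - t := by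
      simp [smul_eq_mul]; ring
    rw [harg] at hc
    have hl : Real.log ((1:ℝ)/2) = -Real.log 2 := by
      rw [Real.log_div (by norm_num) (by norm_num)]; simp
    simp only [smul_eq_mul, hl, Real.log_one, mul_zero, add_zero] at hc
    linarith
  have hlog2 : Real.log 2 ≤ 1 := by
    have := Real.log_le_sub_one_of_pos (by norm_num : (0:ℝ) < 2); linarith
  have h1t : (0:ℝ) ≤ 1 - t := by linarith
  simp only [Real.negMulLog, neg_mul]
  nlinarith [mul_le_mul_of_nonneg_left l1 h0.le, mul_le_mul_of_nonneg_left l2 h1t,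
    mul_nonneg (mul_nonneg h0.le (by linarith : (0:ℝ) ≤ 1 - Real.log 2))
      (by linarith : (0:ℝ) ≤ 1 - 2*t)]

private lemma abs_eta_sub_le (q t : ℝ) (hq : 0 ≤ q) (ht : 0 ≤ t) (ht2 : t ≤ 1/2)
    (hqt : q + t ≤ 1) :
    |Real.negMulLog (q + t) - Real.negMulLog q| ≤ Real.negMulLog t := by
  rw [abs_le]
  constructor
  · have h2 := eta_antitone ht (Set.mem_Ici.2 hq) (Set.mem_Ici.2 (by linarith : (0:ℝ) ≤ 1 - t))
      (by linarith : q ≤ 1 - t)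
    simp only [show (1:ℝ) - t + t = 1 from by ring, Real.negMulLog_one, zero_sub] at h2
    have h3 := eta_one_sub ht ht2
    linarith
  · have h1 := eta_antitone ht (Set.self_mem_Ici) (Set.mem_Ici.2 hq) hq
    simpa using h1

private lemma eta_le_aux {t S mm : ℝ} (ht : 0 ≤ t) (hS : 0 < S) (hm : 0 < mm) :
    Real.negMulLog t ≤ t * Real.log (mm / S) + S / mm - t := by
  rcases eq_or_lt_of_le ht with h0 | h0
  · simp [← h0]
    positivity
  · have hlog : Real.log (S / (t * mm)) ≤ S / (t * mm) - 1 :=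
      Real.log_le_sub_one_of_pos (by positivity)
    have hexp : Real.log (S / (t * mm)) = Real.log S - Real.log t - Real.log mm := by
      rw [Real.log_div (ne_of_gt hS) (by positivity), Real.log_mul (ne_of_gt h0) (ne_of_gt hm)]
      ring
    have hld : Real.log (mm / S) = Real.log mm - Real.log S :=
      Real.log_div (ne_of_gt hm) (ne_of_gt hS)
    have hcancel : t * (S / (t * mm)) = S / mm := by field_simp
    have := mul_le_mul_of_nonneg_left hlog h0.le
    rw [hexp] at this
    rw [Real.negMulLog, hld]
    nlinarith [this]

private lemma log_le_sqrt' {x : ℝ} (hx : 0 < x) : Real.log x ≤ Real.sqrt x := by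
  have hy : 0 < Real.sqrt (Real.sqrt x) := Real.sqrt_pos.2 (Real.sqrt_pos.2 hx)
  have h1 : Real.log (Real.sqrt (Real.sqrt x)) ≤ Real.sqrt (Real.sqrt x) - 1 :=
    Real.log_le_sub_one_of_pos hy
  have h2 : Real.log (Real.sqrt (Real.sqrt x)) = Real.log x / 4 := by
    rw [Real.log_sqrt (Real.sqrt_nonneg x), Real.log_sqrt hx.le]; ring
  have h3 : Real.sqrt (Real.sqrt x) ^ 2 = Real.sqrt x := Real.sq_sqrt (Real.sqrt_nonneg x)
  nlinarith [sq_nonneg (Real.sqrt (Real.sqrt x) - 2)]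

/-- For a distribution `P` on a finite alphabet of size `m ≥ 1` and an
empirical distribution `Ph` with `δ(Ph,P) ≤ 1/4`, the plug-in entropy satisfies
`|Ĥ − H| ≤ −2δ·log(2δ/m)` and consequently `|Ĥ − H| ≤ √(2 m δ)`. -/
theorem stmt17 (m : ℕ) (hm : 1 ≤ m) (P Ph : Fin m → ℝ)
    (hP : ∀ x, 0 ≤ P x) (hPh : ∀ x, 0 ≤ Ph x)
    (hPsum : ∑ x, P x = 1) (hPhsum : ∑ x, Ph x = 1)
    (hδ : (1/2) * ∑ x, |Ph x - P x| ≤ 1/4) :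
    |(-∑ x, Ph x * Real.log (Ph x)) - (-∑ x, P x * Real.log (P x))|
        ≤ -2 * ((1/2) * ∑ x, |Ph x - P x|) *
            Real.log (2 * ((1/2) * ∑ x, |Ph x - P x|) / m) ∧
    |(-∑ x, Ph x * Real.log (Ph x)) - (-∑ x, P x * Real.log (P x))|
        ≤ Real.sqrt (2 * m * ((1/2) * ∑ x, |Ph x - P x|)) := by
  set S := ∑ x, |Ph x - P x| with hSdef
  have hS0 : (0:ℝ) ≤ S := Finset.sum_nonneg fun x _ => abs_nonneg _
  have hShalf : S ≤ 1/2 := by linarith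
  have hm0 : (0:ℝ) < (m:ℝ) := by exact_mod_cast hm
  have hP1 : ∀ x, P x ≤ 1 := fun x =>
    hPsum ▸ Finset.single_le_sum (fun i _ => hP i) (Finset.mem_univ x)
  have hPh1 : ∀ x, Ph x ≤ 1 := fun x =>
    hPhsum ▸ Finset.single_le_sum (fun i _ => hPh i) (Finset.mem_univ x)
  have htle : ∀ x, |Ph x - P x| ≤ S := fun x =>
    Finset.single_le_sum (fun i _ => abs_nonneg (Ph i - P i)) (Finset.mem_univ x)
  -- pointwise bound
  have hterm : ∀ x, |Real.negMulLog (Ph x) - Real.negMulLog (P x)|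
      ≤ Real.negMulLog |Ph x - P x| := by
    intro x
    have hxhalf : |Ph x - P x| ≤ 1/2 := (htle x).trans hShalf
    rcases le_total (P x) (Ph x) with hle | hle
    · have habs : |Ph x - P x| = Ph x - P x := abs_of_nonneg (by linarith)
      have := abs_eta_sub_le (P x) (Ph x - P x) (hP x) (by linarith)
        (by rw [← habs]; exact hxhalf) (by linarith [hPh1 x])
      rw [habs]
      simpa [show P x + (Ph x - P x) = Ph x from by ring] using this
    · have habs : |Ph x - P x| = P x - Ph x := by
        rw [abs_sub_comm]; exact abs_of_nonneg (by linarith)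
      have := abs_eta_sub_le (Ph x) (P x - Ph x) (hPh x) (by linarith)
        (by rw [← habs]; exact hxhalf) (by linarith [hP1 x])
      rw [habs, abs_sub_comm]
      simpa [show Ph x + (P x - Ph x) = P x from by ring] using this
  have expand : (-∑ x, Ph x * Real.log (Ph x)) - (-∑ x, P x * Real.log (P x))
      = ∑ x, (Real.negMulLog (Ph x) - Real.negMulLog (P x)) := by
    simp only [Real.negMulLog, neg_mul, Finset.sum_sub_distrib, Finset.sum_neg_distrib]
  have key : |(-∑ x, Ph x * Real.log (Ph x)) - (-∑ x, P x * Real.log (P x))|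
      ≤ ∑ x, Real.negMulLog |Ph x - P x| := by
    rw [expand]
    exact (Finset.abs_sum_le_sum_abs _ _).trans (Finset.sum_le_sum fun x _ => hterm x)
  -- main sum bound
  have main1 : ∑ x, Real.negMulLog |Ph x - P x| ≤ -S * Real.log (S / m) := by
    rcases eq_or_lt_of_le hS0 with h0 | h0
    · have hz : ∀ x ∈ Finset.univ, |Ph x - P x| = 0 :=
        (Finset.sum_eq_zero_iff_of_nonneg (fun i _ => abs_nonneg _)).mp h0.symm
      rw [Finset.sum_congr rfl fun x hx => by rw [hz x hx, Real.negMulLog_zero]]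
      simp [← h0]
    · have step : ∑ x, Real.negMulLog |Ph x - P x|
          ≤ ∑ x, (|Ph x - P x| * Real.log ((m:ℝ) / S) + S / m - |Ph x - P x|) :=
        Finset.sum_le_sum fun x _ => eta_le_aux (abs_nonneg _) h0 hm0
      have hsum : ∑ x, (|Ph x - P x| * Real.log ((m:ℝ) / S) + S / m - |Ph x - P x|)
          = S * Real.log ((m:ℝ) / S) + (m:ℝ) * (S / m) - S := by
        rw [Finset.sum_sub_distrib, Finset.sum_add_distrib, ← Finset.sum_mul,
          Finset.sum_const, Finset.card_univ, Fintype.card_fin, nsmul_eq_mul, ← hSdef]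
      have hms : (m:ℝ) * (S / m) = S := by field_simp
      have hlogflip : Real.log ((m:ℝ) / S) = - Real.log (S / m) := by
        rw [Real.log_div (ne_of_gt hm0) (ne_of_gt h0), Real.log_div (ne_of_gt h0) (ne_of_gt hm0)]
        ring
      rw [hsum, hms, hlogflip] at step
      linarith
  constructor
  · have heq : -2 * ((1/2) * S) * Real.log (2 * ((1/2) * S) / (m:ℝ))
        = -S * Real.log (S / m) := by
      rw [show (2:ℝ) * ((1/2) * S) / (m:ℝ) = S / m from by ring]
      ring
    rw [heq]
    exact key.trans main1
  · have heq2 : Real.sqrt (2 * (m:ℝ) * ((1/2) * S)) = Real.sqrt ((m:ℝ) * S) := by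
      congr 1; ring
    rw [heq2]
    have hfinal : -S * Real.log (S / m) ≤ Real.sqrt ((m:ℝ) * S) := by
      rcases eq_or_lt_of_le hS0 with h0 | h0
      · rw [← h0]; simp [Real.sqrt_nonneg]
      · have hls : Real.log ((m:ℝ) / S) ≤ Real.sqrt ((m:ℝ) / S) :=
          log_le_sqrt' (by positivity)
        have hlogflip : -Real.log (S / m) = Real.log ((m:ℝ) / S) := by
          rw [Real.log_div (ne_of_gt hm0) (ne_of_gt h0), Real.log_div (ne_of_gt h0) (ne_of_gt hm0)]
          ring
        have hsqrteq : S * Real.sqrt ((m:ℝ) / S) = Real.sqrt ((m:ℝ) * S) := by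
          rw [show S * Real.sqrt ((m:ℝ)/S) = Real.sqrt (S^2) * Real.sqrt ((m:ℝ)/S) from by
            rw [Real.sqrt_sq h0.le], ← Real.sqrt_mul (sq_nonneg S)]
          congr 1
          field_simp
        calc -S * Real.log (S / m) = S * (-Real.log (S/m)) := by ring
          _ = S * Real.log ((m:ℝ) / S) := by rw [hlogflip]
          _ ≤ S * Real.sqrt ((m:ℝ) / S) := by
              exact mul_le_mul_of_nonneg_left hls h0.le
          _ = Real.sqrt ((m:ℝ) * S) := hsqrteq
    exact key.trans (main1.trans hfinal)
end

section
/- The plug-in (maximum likelihood) entropy estimator is negatively biased: E[Ĥ(X)] − H(X) = −E[D(P̂‖P)] ≤ 0, and moreover −log(1 + (|𝒳|−1)/n) ≤ E[Ĥ(X)] − H(X) ≤ 0 for n i.i.d. samples. -/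
open Finset Real

section auxStmt18

variable {n m : ℕ}

lemma stmt18_count_real (s : Fin n → Fin m) (x : Fin m) :
    ((Finset.univ.filter (fun i => s i = x)).card : ℝ) = ∑ i, if s i = x then (1:ℝ) else 0 := by
  simp [Finset.sum_boole]

lemma stmt18_sum_prod_eq (g : Fin n → Fin m → ℝ) :
    ∑ s : Fin n → Fin m, ∏ k, g k (s k) = ∏ k, ∑ y, g k y := by
  rw [Finset.prod_univ_sum]; simp [Fintype.piFinset_univ]

variable (p : Fin m → ℝ)

lemma stmt18_sum_pr (hpsum : ∑ x, p x = 1) : ∑ s : Fin n → Fin m, ∏ i, p (s i) = 1 := by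
  rw [stmt18_sum_prod_eq (fun _ y => p y)]
  simp [hpsum]

lemma stmt18_first_moment (hpsum : ∑ x, p x = 1) (i : Fin n) (x : Fin m) :
    ∑ s : Fin n → Fin m, (∏ k, p (s k)) * (if s i = x then 1 else 0) = p x := by
  have h : ∀ s : Fin n → Fin m, (∏ k, p (s k)) * (if s i = x then 1 else 0)
      = ∏ k, p (s k) * (if k = i then (if s k = x then 1 else 0) else 1) := by
    intro s
    rw [Finset.prod_mul_distrib]
    congr 1
    rw [Finset.prod_ite_eq' Finset.univ i (fun k => if s k = x then (1:ℝ) else 0)]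
    simp
  rw [Finset.sum_congr rfl (fun s _ => h s),
    stmt18_sum_prod_eq (fun k y => p y * (if k = i then (if y = x then 1 else 0) else 1))]
  have h2 : ∀ k : Fin n, ∑ y, p y * (if k = i then (if y = x then 1 else 0) else 1)
      = if k = i then p x else 1 := by
    intro k
    by_cases hk : k = i <;> simp [hk, mul_ite, hpsum]
  rw [Finset.prod_congr rfl (fun k _ => h2 k), Finset.prod_ite_eq' Finset.univ i (fun _ => p x)]
  simp

lemma stmt18_second_moment (hpsum : ∑ x, p x = 1) {i j : Fin n} (hij : i ≠ j) (x : Fin m) :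
    ∑ s : Fin n → Fin m, (∏ k, p (s k)) *
      ((if s i = x then 1 else 0) * (if s j = x then 1 else 0)) = p x ^ 2 := by
  have h : ∀ s : Fin n → Fin m, (∏ k, p (s k)) *
      ((if s i = x then 1 else 0) * (if s j = x then 1 else 0))
      = ∏ k, p (s k) * (if k = i ∨ k = j then (if s k = x then 1 else 0) else 1) := by
    intro s
    rw [Finset.prod_mul_distrib]
    congr 1
    have : (Finset.univ.filter (fun k : Fin n => k = i ∨ k = j)) = {i, j} := by
      ext k; simp [or_comm]
    rw [← Finset.prod_filter, this, Finset.prod_pair hij]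
  rw [Finset.sum_congr rfl (fun s _ => h s),
    stmt18_sum_prod_eq (fun k y => p y * (if k = i ∨ k = j then (if y = x then 1 else 0) else 1))]
  have h2 : ∀ k : Fin n, ∑ y, p y * (if k = i ∨ k = j then (if y = x then 1 else 0) else 1)
      = if k = i ∨ k = j then p x else 1 := by
    intro k
    by_cases hk : k = i ∨ k = j <;> simp [hk, mul_ite, hpsum]
  rw [Finset.prod_congr rfl (fun k _ => h2 k), ← Finset.prod_filter]
  have : (Finset.univ.filter (fun k : Fin n => k = i ∨ k = j)) = {i, j} := by
    ext k; simp [or_comm]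
  rw [this, Finset.prod_const, Finset.card_pair hij]

lemma stmt18_emp_moment1 (hpsum : ∑ x, p x = 1) (x : Fin m) :
    ∑ s : Fin n → Fin m, (∏ k, p (s k)) *
      (((Finset.univ.filter (fun i => s i = x)).card : ℝ) / n) = p x * (n / n) := by
  have h : ∀ s : Fin n → Fin m, (∏ k, p (s k)) *
      (((Finset.univ.filter (fun i => s i = x)).card : ℝ) / n)
      = (∑ i, (∏ k, p (s k)) * (if s i = x then 1 else 0)) / n := by
    intro s
    rw [stmt18_count_real, ← mul_div_assoc, Finset.mul_sum]
  rw [Finset.sum_congr rfl (fun s _ => h s), ← Finset.sum_div, Finset.sum_comm]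
  rw [Finset.sum_congr rfl (fun i _ => stmt18_first_moment p hpsum i x)]
  simp [Finset.sum_const, mul_comm, mul_div_assoc]

lemma stmt18_emp_moment2 (hpsum : ∑ x, p x = 1) (x : Fin m) :
    ∑ s : Fin n → Fin m, (∏ k, p (s k)) *
      (((Finset.univ.filter (fun i => s i = x)).card : ℝ) / n) ^ 2
      = ((n : ℝ) * p x + ((n:ℝ)^2 - n) * p x ^ 2) / (n:ℝ)^2 := by
  have h : ∀ s : Fin n → Fin m, (∏ k, p (s k)) *
      (((Finset.univ.filter (fun i => s i = x)).card : ℝ) / n) ^ 2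
      = (∑ i : Fin n, ∑ j : Fin n, (∏ k, p (s k)) *
          ((if s i = x then (1:ℝ) else 0) * (if s j = x then 1 else 0))) / (n:ℝ)^2 := by
    intro s
    rw [stmt18_count_real, div_pow, sq, Finset.sum_mul_sum, ← mul_div_assoc, Finset.mul_sum]
    congr 1
    refine Finset.sum_congr rfl fun i _ => ?_
    rw [Finset.mul_sum]
  rw [Finset.sum_congr rfl (fun s _ => h s), ← Finset.sum_div]
  congr 1
  rw [Finset.sum_comm]
  have key : ∀ i : Fin n, (∑ s : Fin n → Fin m, ∑ j : Fin n, (∏ k, p (s k)) *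
      ((if s i = x then (1:ℝ) else 0) * (if s j = x then 1 else 0)))
      = ∑ j : Fin n, (if i = j then p x else p x ^ 2) := by
    intro i
    rw [Finset.sum_comm]
    refine Finset.sum_congr rfl fun j _ => ?_
    by_cases hij : i = j
    · subst hij
      have hss : ∀ s : Fin n → Fin m,
          (∏ k, p (s k)) * ((if s i = x then (1:ℝ) else 0) * (if s i = x then 1 else 0))
          = (∏ k, p (s k)) * (if s i = x then 1 else 0) := by
        intro s; by_cases hsx : s i = x <;> simp [hsx]
      rw [Finset.sum_congr rfl (fun s _ => hss s), stmt18_first_moment p hpsum i x]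
      simp
    · rw [stmt18_second_moment p hpsum hij x]; simp [hij]
  rw [Finset.sum_congr rfl (fun i _ => key i)]
  have h2 : ∀ i : Fin n, (∑ j : Fin n, (if i = j then p x else p x ^ 2))
      = p x + ((n:ℝ) - 1) * p x ^ 2 := by
    intro i
    have h3 : ∀ j : Fin n, (if i = j then p x else p x ^ 2)
        = p x ^ 2 + (if i = j then p x - p x ^ 2 else 0) := by
      intro j; by_cases h : i = j <;> simp [h]
    rw [Finset.sum_congr rfl (fun j _ => h3 j), Finset.sum_add_distrib, Finset.sum_ite_eq]
    simp
    ring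
  rw [Finset.sum_congr rfl (fun i _ => h2 i), Finset.sum_const]
  simp
  ring

lemma stmt18_emp_sum_one (hn : 1 ≤ n) (s : Fin n → Fin m) :
    ∑ x, ((Finset.univ.filter (fun i => s i = x)).card : ℝ) / n = 1 := by
  rw [← Finset.sum_div]
  rw [Finset.sum_congr rfl (fun x _ => stmt18_count_real s x), Finset.sum_comm]
  have h : ∀ i : Fin n, ∑ x, (if s i = x then (1:ℝ) else 0) = 1 := by
    intro i; simp
  rw [Finset.sum_congr rfl (fun i _ => h i)]
  simp
  omega

lemma stmt18_supp (hp : ∀ x, 0 ≤ p x) {s : Fin n → Fin m} (hpr : (∏ k, p (s k)) ≠ 0)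
    {x : Fin m} (he : ((Finset.univ.filter (fun i => s i = x)).card : ℝ) / n ≠ 0) :
    0 < p x := by
  have hcard : (Finset.univ.filter (fun i => s i = x)).Nonempty := by
    rw [Finset.nonempty_iff_ne_empty]
    intro hempty
    apply he
    rw [hempty]
    simp
  obtain ⟨i, hi⟩ := hcard
  simp only [Finset.mem_filter] at hi
  have := (Finset.prod_ne_zero_iff.mp hpr) i (Finset.mem_univ i)
  rw [hi.2] at this
  exact lt_of_le_of_ne (hp x) (Ne.symm this)

lemma stmt18_part1 (hn : 1 ≤ n) (hp : ∀ x, 0 ≤ p x) (hpsum : ∑ x, p x = 1) :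
    (∑ s : Fin n → Fin m, (∏ k, p (s k)) *
        (-∑ x, (((Finset.univ.filter (fun i => s i = x)).card : ℝ) / n) *
          Real.log (((Finset.univ.filter (fun i => s i = x)).card : ℝ) / n)))
      - (-∑ x, p x * Real.log (p x))
      = -(∑ s : Fin n → Fin m, (∏ k, p (s k)) *
        ∑ x, (((Finset.univ.filter (fun i => s i = x)).card : ℝ) / n) *
          Real.log ((((Finset.univ.filter (fun i => s i = x)).card : ℝ) / n) / p x)) := by
  have hn0 : (n:ℝ) ≠ 0 := Nat.cast_ne_zero.mpr (by omega)
  have key : (∑ s : Fin n → Fin m, (∏ k, p (s k)) *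
        (-∑ x, (((Finset.univ.filter (fun i => s i = x)).card : ℝ) / n) *
          Real.log (((Finset.univ.filter (fun i => s i = x)).card : ℝ) / n)))
      + (∑ s : Fin n → Fin m, (∏ k, p (s k)) *
        ∑ x, (((Finset.univ.filter (fun i => s i = x)).card : ℝ) / n) *
          Real.log ((((Finset.univ.filter (fun i => s i = x)).card : ℝ) / n) / p x))
      = -∑ x, p x * Real.log (p x) := by
    rw [← Finset.sum_add_distrib]
    have per_s : ∀ s : Fin n → Fin m, (∏ k, p (s k)) *
        (-∑ x, (((Finset.univ.filter (fun i => s i = x)).card : ℝ) / n) *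
          Real.log (((Finset.univ.filter (fun i => s i = x)).card : ℝ) / n))
      + (∏ k, p (s k)) *
        (∑ x, (((Finset.univ.filter (fun i => s i = x)).card : ℝ) / n) *
          Real.log ((((Finset.univ.filter (fun i => s i = x)).card : ℝ) / n) / p x))
      = ∑ x, (∏ k, p (s k)) * ((((Finset.univ.filter (fun i => s i = x)).card : ℝ) / n)
          * (-Real.log (p x))) := by
      intro s
      rw [← mul_add, neg_add_eq_sub, ← Finset.sum_sub_distrib, Finset.mul_sum]
      refine Finset.sum_congr rfl fun x _ => ?_
      by_cases hpr : (∏ k, p (s k)) = 0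
      · simp [hpr]
      by_cases he : (((Finset.univ.filter (fun i => s i = x)).card : ℝ) / n) = 0
      · simp [he]
      have hpx : 0 < p x := stmt18_supp p hp hpr he
      rw [Real.log_div he (ne_of_gt hpx)]
      ring
    rw [Finset.sum_congr rfl (fun s _ => per_s s), Finset.sum_comm]
    have per_x : ∀ x : Fin m, (∑ s : Fin n → Fin m, (∏ k, p (s k)) *
        ((((Finset.univ.filter (fun i => s i = x)).card : ℝ) / n) * (-Real.log (p x))))
        = p x * (-Real.log (p x)) := by
      intro x
      have : ∀ s : Fin n → Fin m, (∏ k, p (s k)) *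
          ((((Finset.univ.filter (fun i => s i = x)).card : ℝ) / n) * (-Real.log (p x)))
          = ((∏ k, p (s k)) * (((Finset.univ.filter (fun i => s i = x)).card : ℝ) / n))
            * (-Real.log (p x)) := fun s => by ring
      rw [Finset.sum_congr rfl (fun s _ => this s), ← Finset.sum_mul,
        stmt18_emp_moment1 p hpsum x, div_self hn0, mul_one]
    rw [Finset.sum_congr rfl (fun x _ => per_x x)]
    simp [mul_neg, Finset.sum_neg_distrib]
  linarith

lemma stmt18_part3 (hn : 1 ≤ n) (hp : ∀ x, 0 ≤ p x) (hpsum : ∑ x, p x = 1) :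
    0 ≤ ∑ s : Fin n → Fin m, (∏ k, p (s k)) *
        ∑ x, (((Finset.univ.filter (fun i => s i = x)).card : ℝ) / n) *
          Real.log ((((Finset.univ.filter (fun i => s i = x)).card : ℝ) / n) / p x) := by
  refine Finset.sum_nonneg fun s _ => ?_
  by_cases hpr : (∏ k, p (s k)) = 0
  · simp [hpr]
  refine mul_nonneg (Finset.prod_nonneg fun k _ => hp _) ?_
  set C : Fin m → ℝ := fun x => (((Finset.univ.filter (fun i => s i = x)).card : ℝ) / n) with hC
  have hCnonneg : ∀ x, 0 ≤ C x := fun x => by positivity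
  have hres : ∑ x ∈ Finset.univ.filter (fun x => C x ≠ 0), C x * Real.log (C x / p x)
      = ∑ x, C x * Real.log (C x / p x) := by
    refine Finset.sum_filter_of_ne fun x _ hne => ?_
    intro h0; apply hne; rw [h0]; ring
  rw [← hres]
  have hstep : ∀ x ∈ Finset.univ.filter (fun x => C x ≠ 0),
      C x - p x ≤ C x * Real.log (C x / p x) := by
    intro x hx
    simp only [Finset.mem_filter] at hx
    have hCpos : 0 < C x := lt_of_le_of_ne (hCnonneg x) (Ne.symm hx.2)
    have hpx : 0 < p x := stmt18_supp p hp hpr hx.2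
    have hlog : Real.log (p x / C x) ≤ p x / C x - 1 :=
      Real.log_le_sub_one_of_pos (by positivity)
    have hlog2 : 1 - p x / C x ≤ Real.log (C x / p x) := by
      have hneg : Real.log (C x / p x) = - Real.log (p x / C x) := by
        rw [← Real.log_inv, inv_div]
      rw [hneg]; linarith
    have := mul_le_mul_of_nonneg_left hlog2 (le_of_lt hCpos)
    calc C x - p x = C x * (1 - p x / C x) := by field_simp
      _ ≤ C x * Real.log (C x / p x) := this
  have hsumC : ∑ x ∈ Finset.univ.filter (fun x => C x ≠ 0), C x = 1 := by
    rw [Finset.sum_filter_of_ne fun x _ hne => hne]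
    exact stmt18_emp_sum_one hn s
  have hsump : ∑ x ∈ Finset.univ.filter (fun x => C x ≠ 0), p x ≤ 1 := by
    rw [← hpsum]
    exact Finset.sum_le_sum_of_subset_of_nonneg (Finset.filter_subset _ _)
      (fun x _ _ => hp x)
  have := Finset.sum_le_sum hstep
  rw [Finset.sum_sub_distrib, hsumC] at this
  linarith

lemma stmt18_part2 (hn : 1 ≤ n) (hp : ∀ x, 0 ≤ p x) (hpsum : ∑ x, p x = 1) :
    (∑ s : Fin n → Fin m, (∏ k, p (s k)) *
        ∑ x, (((Finset.univ.filter (fun i => s i = x)).card : ℝ) / n) *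
          Real.log ((((Finset.univ.filter (fun i => s i = x)).card : ℝ) / n) / p x))
      ≤ Real.log (1 + ((m : ℝ) - 1) / n) := by
  have hn0 : (n:ℝ) ≠ 0 := Nat.cast_ne_zero.mpr (by omega)
  have hnpos : (0:ℝ) < n := by positivity
  set C : (Fin n → Fin m) → Fin m → ℝ :=
    fun s x => (((Finset.univ.filter (fun i => s i = x)).card : ℝ) / n) with hC
  set W : ((Fin n → Fin m) × Fin m) → ℝ := fun q => (∏ k, p (q.1 k)) * C q.1 q.2 with hW
  set T : ((Fin n → Fin m) × Fin m) → ℝ := fun q => C q.1 q.2 / p q.2 with hT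
  have hCnonneg : ∀ s x, 0 ≤ C s x := fun s x => by positivity
  have hWnonneg : ∀ q, 0 ≤ W q := fun q =>
    mul_nonneg (Finset.prod_nonneg fun k _ => hp _) (hCnonneg _ _)
  -- rewrite LHS as a sum over pairs
  have hLHS : (∑ s : Fin n → Fin m, (∏ k, p (s k)) *
        ∑ x, C s x * Real.log (C s x / p x))
      = ∑ q : (Fin n → Fin m) × Fin m, W q * Real.log (T q) := by
    rw [Fintype.sum_prod_type]
    refine Finset.sum_congr rfl fun s _ => ?_
    rw [Finset.mul_sum]
    refine Finset.sum_congr rfl fun x _ => ?_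
    simp only [hW, hT]
    ring
  rw [hLHS]
  set S : Finset ((Fin n → Fin m) × Fin m) := Finset.univ.filter (fun q => W q ≠ 0) with hS
  have hres : ∑ q ∈ S, W q * Real.log (T q) = ∑ q, W q * Real.log (T q) := by
    refine Finset.sum_filter_of_ne fun q _ hne => ?_
    intro h0; apply hne; rw [h0]; ring
  rw [← hres]
  have hsum1 : ∑ q ∈ S, W q = 1 := by
    rw [Finset.sum_filter_of_ne fun q _ hne => hne, Fintype.sum_prod_type]
    have : ∀ s : Fin n → Fin m, ∑ x, W (s, x) = ∏ k, p (s k) := by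
      intro s
      simp only [hW]
      rw [← Finset.mul_sum]
      have := stmt18_emp_sum_one (n := n) (m := m) hn s
      rw [show (∑ x, C s x) = 1 from this, mul_one]
    rw [Finset.sum_congr rfl (fun s _ => this s)]
    exact stmt18_sum_pr p hpsum
  have hTpos : ∀ q ∈ S, T q ∈ Set.Ioi (0:ℝ) := by
    intro q hq
    simp only [hS, Finset.mem_filter] at hq
    have hq2 := hq.2
    have hpr : (∏ k, p (q.1 k)) ≠ 0 := fun h => hq2 (by simp [hW, h])
    have hCq : C q.1 q.2 ≠ 0 := fun h => hq2 (by simp [hW, h])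
    have hpq : 0 < p q.2 := stmt18_supp p hp hpr hCq
    have hCpos : 0 < C q.1 q.2 := lt_of_le_of_ne (hCnonneg _ _) (Ne.symm hCq)
    exact Set.mem_Ioi.mpr (by positivity)
  have hjensen := (strictConcaveOn_log_Ioi.concaveOn).le_map_sum
    (fun q _ => hWnonneg q) hsum1 hTpos
  simp only [smul_eq_mul] at hjensen
  refine le_trans hjensen ?_
  -- bound the argument of log
  have hSne : S.Nonempty := by
    rcases Finset.eq_empty_or_nonempty S with h | h
    · rw [h] at hsum1; simp at hsum1
    · exact h
  have hRpos : 0 < ∑ q ∈ S, W q * T q := by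
    refine Finset.sum_pos (fun q hq => ?_) hSne
    have hWq : 0 < W q := lt_of_le_of_ne (hWnonneg q)
      (Ne.symm (by simp only [hS, Finset.mem_filter] at hq; exact hq.2))
    have hTq : 0 < T q := hTpos q hq
    positivity
  refine Real.log_le_log hRpos ?_
  have hext : ∑ q ∈ S, W q * T q = ∑ q, W q * T q := by
    refine Finset.sum_filter_of_ne fun q _ hne => ?_
    intro h0; apply hne; rw [h0]; ring
  rw [hext, Fintype.sum_prod_type, Finset.sum_comm]
  have hxbound : ∀ x : Fin m, (∑ s : Fin n → Fin m, W (s, x) * T (s, x))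
      ≤ (1 + ((n:ℝ) - 1) * p x) / n := by
    intro x
    by_cases hpx : p x = 0
    · have : ∀ s : Fin n → Fin m, W (s, x) * T (s, x) = 0 := by
        intro s; simp [hW, hT, hpx]
      rw [Finset.sum_congr rfl (fun s _ => this s), Finset.sum_const]
      simp [hpx]
    · have hpxpos : 0 < p x := lt_of_le_of_ne (hp x) (Ne.symm hpx)
      have : ∀ s : Fin n → Fin m, W (s, x) * T (s, x)
          = ((∏ k, p (s k)) * (C s x) ^ 2) / p x := by
        intro s; simp only [hW, hT]; rw [sq]; ring
      rw [Finset.sum_congr rfl (fun s _ => this s), ← Finset.sum_div]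
      rw [show (∑ s : Fin n → Fin m, (∏ k, p (s k)) * (C s x) ^ 2)
          = ((n : ℝ) * p x + ((n:ℝ)^2 - n) * p x ^ 2) / (n:ℝ)^2 from
        stmt18_emp_moment2 p hpsum x]
      refine le_of_eq ?_
      field_simp
  refine le_trans (Finset.sum_le_sum fun x _ => hxbound x) ?_
  rw [← Finset.sum_div, Finset.sum_add_distrib, ← Finset.mul_sum, hpsum, Finset.sum_const]
  simp only [Finset.card_univ, Fintype.card_fin, nsmul_eq_mul, mul_one]
  refine le_of_eq ?_
  field_simp
  ring

end auxStmt18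




/-- The plug-in entropy estimator from `n` i.i.d. samples is negatively
biased: `E[Ĥ] − H = −E[D(P̂‖P)] ≤ 0`, and moreover
`−log(1 + (|𝒳|−1)/n) ≤ E[Ĥ] − H ≤ 0`. Expectations are over the i.i.d. sample vector
`s : Fin n → Fin m` with weight `∏ i, p (s i)`; `emp s` is the empirical distribution. -/
theorem stmt18 (m n : ℕ) (hn : 1 ≤ n) (p : Fin m → ℝ)
    (hp : ∀ x, 0 ≤ p x) (hpsum : ∑ x, p x = 1) :
    ∀ emp : (Fin n → Fin m) → Fin m → ℝ,
      (emp = fun s x => ((Finset.univ.filter (fun i => s i = x)).card : ℝ) / n) →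
    ∀ pr : (Fin n → Fin m) → ℝ, (pr = fun s => ∏ i, p (s i)) →
    ∀ H : (Fin m → ℝ) → ℝ, (H = fun w => -∑ x, w x * Real.log (w x)) →
    ∀ D : (Fin m → ℝ) → (Fin m → ℝ) → ℝ,
      (D = fun a b => ∑ x, a x * Real.log (a x / b x)) →
    ((∑ s, pr s * H (emp s)) - H p = -(∑ s, pr s * D (emp s) p) ∧
     -Real.log (1 + ((m : ℝ) - 1) / n) ≤ (∑ s, pr s * H (emp s)) - H p ∧
     (∑ s, pr s * H (emp s)) - H p ≤ 0) := by
  intro emp hemp pr hpr H hH D hD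
  subst hemp hpr hH hD
  have h1 := stmt18_part1 p hn hp hpsum
  have h2 := stmt18_part2 p hn hp hpsum
  have h3 := stmt18_part3 p hn hp hpsum
  refine ⟨by simpa using h1, ?_, ?_⟩
  · simp only []
    rw [h1]
    exact neg_le_neg h2
  · simp only []
    rw [h1]
    simpa using h3
end
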